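/- Suppose every clade C(e) (e ∈ E) is nonempty. Then the Pareto condition Σ_{i ∈ X} ψ_i = PD(X) holds for all choices of positive edge lengths l : E → (0, ∞) and all extinction probabilities ε : X → (0, 1) if and only if every clade C(e) is a singleton (i.e. the tree is a star tree in which every leaf is adjacent to the root). -/

import Mathlib

open Finset

/-- Rooted phylogenetic diversity: the sum of the lengths of edges `e` whose
clade `C e` meets `S`. -/
noncomputable def PD {X E : Type*} [Fintype E] [DecidableEq X]
    (l : E → ℝ) (C : E → Finset X) (S : Finset X) : ℝ :=
  ∑ e ∈ univ.filter (fun e => (C e ∩ S).Nonempty), l e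

/-- Heightened evolutionary distinctiveness (HED) of species `i`:
the expected marginal contribution of `i` to phylogenetic diversity, under
independent extinctions with extinction probabilities `ε`. -/
noncomputable def psi {X E : Type*} [Fintype X] [Fintype E] [DecidableEq X]
    (l : E → ℝ) (C : E → Finset X) (ε : X → ℝ) (i : X) : ℝ :=
  ∑ S ∈ ((univ : Finset X) \ {i}).powerset,
    ((∏ j ∈ S, (1 - ε j)) * ∏ j ∈ ((univ : Finset X) \ {i}) \ S, ε j) *
      (PD l C (S ∪ {i}) - PD l C S)

/-- The total weight of all survival scenarios is `1`. -/
lemma weight_sum {X : Type*} [DecidableEq X] (ε : X → ℝ) (T : Finset X) :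
    ∑ S ∈ T.powerset, (∏ j ∈ S, (1 - ε j)) * ∏ j ∈ T \ S, ε j = 1 := by
  have := Finset.prod_add (fun j => 1 - ε j) ε T
  simp at this
  rw [← this]

/-- The marginal contribution of `i` given survivors `S` (with `i ∉ S`). -/
lemma PD_diff {X E : Type*} [Fintype E] [DecidableEq X]
    (l : E → ℝ) (C : E → Finset X) (i : X) (S : Finset X) (hi : i ∉ S) :
    PD l C (S ∪ {i}) - PD l C S
      = ∑ e : E, if i ∈ C e ∧ C e ∩ S = ∅ then l e else 0 := by
  unfold PD
  rw [Finset.sum_filter, Finset.sum_filter, ← Finset.sum_sub_distrib]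
  refine Finset.sum_congr rfl fun e _ => ?_
  by_cases h1 : (C e ∩ S).Nonempty
  · have h2 : (C e ∩ (S ∪ {i})).Nonempty := by
      obtain ⟨x, hx⟩ := h1
      exact ⟨x, by simp [mem_inter] at hx ⊢; tauto⟩
    rw [if_pos h2, if_pos h1]; simp [Finset.nonempty_iff_ne_empty.mp h1]
  · rw [Finset.not_nonempty_iff_eq_empty] at h1
    by_cases h3 : i ∈ C e
    · have h2 : (C e ∩ (S ∪ {i})).Nonempty := ⟨i, by simp [h3]⟩
      simp [h1, h2, h3]
    · have h2 : ¬ (C e ∩ (S ∪ {i})).Nonempty := by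
        rw [Finset.not_nonempty_iff_eq_empty, Finset.inter_union_distrib_left, h1]
        simp
        ext x
        simp only [mem_inter, mem_singleton, notMem_empty, iff_false]
        rintro ⟨hx, rfl⟩
        exact h3 hx
      simp [h1, h2, h3]

/-- Closed form for HED: `ψ i = Σ_{e : i ∈ C e} l e · Π_{j ∈ C e \ {i}} ε j`. -/
lemma psi_eq {X E : Type*} [Fintype X] [Fintype E] [DecidableEq X]
    (l : E → ℝ) (C : E → Finset X) (ε : X → ℝ) (i : X) :
    psi l C ε i
      = ∑ e ∈ univ.filter (fun e => i ∈ C e), l e * ∏ j ∈ (C e).erase i, ε j := by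
  unfold psi
  have key : ∀ S ∈ ((univ : Finset X) \ {i}).powerset,
      ((∏ j ∈ S, (1 - ε j)) * ∏ j ∈ ((univ : Finset X) \ {i}) \ S, ε j) *
        (PD l C (S ∪ {i}) - PD l C S)
      = ∑ e : E, ((∏ j ∈ S, (1 - ε j)) * ∏ j ∈ ((univ : Finset X) \ {i}) \ S, ε j) *
          (if i ∈ C e ∧ C e ∩ S = ∅ then l e else 0) := by
    intro S hS
    have hi : i ∉ S := by
      intro h
      have := Finset.mem_powerset.mp hS h
      simp at this
    rw [PD_diff l C i S hi, Finset.mul_sum]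
  rw [Finset.sum_congr rfl key, Finset.sum_comm]
  rw [Finset.sum_filter]
  refine Finset.sum_congr rfl fun e _ => ?_
  by_cases h3 : i ∈ C e
  · set A := ((univ : Finset X) \ {i}) with hA
    set B := (C e).erase i with hB
    have hBA : B ⊆ A := fun x hx => by
      simp only [hB, mem_erase] at hx
      simp [hA, hx.1]
    have step1 : ∑ S ∈ A.powerset,
        ((∏ j ∈ S, (1 - ε j)) * ∏ j ∈ A \ S, ε j) * (if i ∈ C e ∧ C e ∩ S = ∅ then l e else 0)
        = ∑ S ∈ (A \ B).powerset,
            ((∏ j ∈ S, (1 - ε j)) * ∏ j ∈ A \ S, ε j) * l e := by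
      rw [← Finset.sum_filter_add_sum_filter_not A.powerset (fun S => C e ∩ S = ∅)]
      have h0 : ∑ S ∈ A.powerset.filter (fun S => ¬ (C e ∩ S = ∅)),
          ((∏ j ∈ S, (1 - ε j)) * ∏ j ∈ A \ S, ε j) *
            (if i ∈ C e ∧ C e ∩ S = ∅ then l e else 0) = 0 := by
        refine Finset.sum_eq_zero fun S hS => ?_
        simp only [mem_filter] at hS
        simp [hS.2]
      rw [h0, add_zero]
      have hset : A.powerset.filter (fun S => C e ∩ S = ∅) = (A \ B).powerset := by
        ext S
        simp only [mem_filter, mem_powerset]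
        constructor
        · rintro ⟨hSA, hemp⟩ x hx
          simp only [mem_sdiff, hB, mem_erase]
          refine ⟨hSA hx, fun h => ?_⟩
          have : x ∈ C e ∩ S := mem_inter.mpr ⟨h.2, hx⟩
          simp [hemp] at this
        · intro hS
          constructor
          · exact hS.trans (Finset.sdiff_subset)
          · ext x
            simp only [mem_inter, notMem_empty, iff_false]
            rintro ⟨hx1, hx2⟩
            have h4 := hS hx2
            simp only [mem_sdiff, hB, mem_erase, hA, mem_singleton] at h4
            exact h4.2 ⟨by rintro rfl; exact h4.1.2 rfl, hx1⟩
      rw [hset]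
      refine Finset.sum_congr rfl fun S hS => ?_
      have hcond : i ∈ C e ∧ C e ∩ S = ∅ := by
        refine ⟨h3, ?_⟩
        rw [mem_powerset] at hS
        ext x
        simp only [mem_inter, notMem_empty, iff_false]
        rintro ⟨hx1, hx2⟩
        have h4 := hS hx2
        simp only [mem_sdiff, hB, mem_erase, hA, mem_singleton] at h4
        exact h4.2 ⟨by rintro rfl; exact h4.1.2 rfl, hx1⟩
      simp [hcond]
    rw [if_pos h3, step1]
    have split : ∀ S ∈ (A \ B).powerset,
        ((∏ j ∈ S, (1 - ε j)) * ∏ j ∈ A \ S, ε j) * l e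
        = ((∏ j ∈ S, (1 - ε j)) * ∏ j ∈ (A \ B) \ S, ε j) * ((∏ j ∈ B, ε j) * l e) := by
      intro S hS
      rw [mem_powerset] at hS
      have hsets : A \ S = ((A \ B) \ S) ∪ B := by
        ext x
        simp only [mem_sdiff, mem_union]
        constructor
        · intro ⟨hx1, hx2⟩
          by_cases hxB : x ∈ B
          · exact Or.inr hxB
          · exact Or.inl ⟨⟨hx1, hxB⟩, hx2⟩
        · rintro (⟨⟨hx1, _⟩, hx2⟩ | hxB)
          · exact ⟨hx1, hx2⟩
          · refine ⟨hBA hxB, fun hxS => ?_⟩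
            have := hS hxS
            simp only [mem_sdiff] at this
            exact this.2 hxB
      have hdisj : Disjoint ((A \ B) \ S) B := by
        refine Finset.disjoint_left.mpr fun x hx => ?_
        simp only [mem_sdiff] at hx
        exact hx.1.2
      rw [hsets, Finset.prod_union hdisj]
      ring
    rw [Finset.sum_congr rfl split, ← Finset.sum_mul, weight_sum]
    ring
  · simp only [h3, false_and, if_false, mul_zero]
    simp

/-- Total HED as a sum over edges. -/
lemma sum_psi {X E : Type*} [Fintype X] [Fintype E] [DecidableEq X]
    (l : E → ℝ) (C : E → Finset X) (ε : X → ℝ) :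
    ∑ i : X, psi l C ε i
      = ∑ e : E, l e * ∑ i ∈ C e, ∏ j ∈ (C e).erase i, ε j := by
  simp only [psi_eq, Finset.sum_filter]
  rw [Finset.sum_comm]
  refine Finset.sum_congr rfl fun e _ => ?_
  rw [Finset.mul_sum, ← Finset.sum_filter]
  congr 1
  ext x; simp

lemma PD_univ {X E : Type*} [Fintype X] [Fintype E] [DecidableEq X]
    (l : E → ℝ) (C : E → Finset X) (hC : ∀ e, (C e).Nonempty) :
    PD l C (univ : Finset X) = ∑ e : E, l e := by
  unfold PD
  refine Finset.sum_congr ?_ fun _ _ => rfl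
  refine Finset.filter_true_of_mem fun e _ => ?_
  simpa using hC e

lemma nat_bound (n : ℕ) (hn : 2 ≤ n) : (n : ℝ) * (1/4 : ℝ) ^ (n - 1) < 1 := by
  have h4 : (n : ℝ) < 4 ^ (n - 1) := by
    have : n < 4 ^ (n - 1) := by
      obtain ⟨m, rfl⟩ : ∃ m, n = m + 2 := ⟨n - 2, by omega⟩
      have h1 : m + 1 ≤ 4 ^ m := by
        have : m < 4 ^ m := Nat.lt_pow_self (by norm_num : 1 < 4); omega
      calc m + 2 < 4 * (m + 1) := by omega
        _ ≤ 4 * 4 ^ m := by omega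
        _ = 4 ^ (m + 2 - 1) := by
            rw [show m + 2 - 1 = m + 1 from rfl, pow_succ]; ring
    calc (n:ℝ) < ((4 ^ (n-1) : ℕ) : ℝ) := by exact_mod_cast this
      _ = 4 ^ (n-1) := by push_cast; ring
  have hp : (0:ℝ) < 4 ^ (n - 1) := by positivity
  rw [div_pow, one_pow, mul_div_assoc', mul_one, div_lt_one hp]
  exact h4

/-- The Pareto condition `Σ_i ψ_i = PD(X)` holds for all positive edge lengths
and all extinction probabilities in `(0,1)` if and only if every clade is a
singleton (the tree is a star tree). -/
theorem pareto_iff_star {X E : Type*} [Fintype X] [Fintype E] [DecidableEq X]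
    (C : E → Finset X) (hC : ∀ e, (C e).Nonempty) :
    (∀ l : E → ℝ, (∀ e, 0 < l e) →
      ∀ ε : X → ℝ, (∀ j, 0 < ε j ∧ ε j < 1) →
        ∑ i : X, psi l C ε i = PD l C (univ : Finset X)) ↔
    (∀ e, ∃ x, C e = {x}) := by
  constructor
  · intro h
    by_contra hcon
    push_neg at hcon
    obtain ⟨e0, he0⟩ := hcon
    have hcard0 : 2 ≤ (C e0).card := by
      rcases Nat.lt_or_ge (C e0).card 2 with h2 | h2
      · interval_cases h : (C e0).card
        · exact absurd (Finset.card_eq_zero.mp h) (Finset.nonempty_iff_ne_empty.mp (hC e0))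
        · obtain ⟨x, hx⟩ := Finset.card_eq_one.mp h
          exact absurd hx (he0 x)
      · exact h2
    have key := h (fun _ => 1) (fun _ => one_pos) (fun _ => 1/4) (fun _ => by norm_num)
    rw [sum_psi, PD_univ _ _ hC] at key
    have hterm : ∀ e : E, (1:ℝ) * ∑ i ∈ C e, ∏ j ∈ (C e).erase i, (1/4 : ℝ) ≤ 1 := by
      intro e
      rw [one_mul]
      have hval : ∀ i ∈ C e, ∏ j ∈ (C e).erase i, (1/4 : ℝ)
          = (1/4 : ℝ) ^ ((C e).card - 1) := by
        intro i hi
        rw [Finset.prod_const, Finset.card_erase_of_mem hi]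
      rw [Finset.sum_congr rfl hval, Finset.sum_const, nsmul_eq_mul]
      rcases Nat.lt_or_ge (C e).card 2 with h2 | h2
      · have h1 : (C e).card = 1 := by
          have := Finset.card_pos.mpr (hC e); omega
        simp [h1]
      · exact le_of_lt (nat_bound _ h2)
    have hstrict : (1:ℝ) * ∑ i ∈ C e0, ∏ j ∈ (C e0).erase i, (1/4 : ℝ) < 1 := by
      rw [one_mul]
      have hval : ∀ i ∈ C e0, ∏ j ∈ (C e0).erase i, (1/4 : ℝ)
          = (1/4 : ℝ) ^ ((C e0).card - 1) := by
        intro i hi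
        rw [Finset.prod_const, Finset.card_erase_of_mem hi]
      rw [Finset.sum_congr rfl hval, Finset.sum_const, nsmul_eq_mul]
      exact nat_bound _ hcard0
    have hlt : ∑ e : E, (1:ℝ) * ∑ i ∈ C e, ∏ j ∈ (C e).erase i, (1/4 : ℝ)
        < ∑ _e : E, (1:ℝ) :=
      Finset.sum_lt_sum (fun e _ => hterm e) ⟨e0, Finset.mem_univ e0, hstrict⟩
    rw [key] at hlt
    simp at hlt
  · intro hstar l hl ε hε
    rw [sum_psi, PD_univ _ _ hC]
    refine Finset.sum_congr rfl fun e _ => ?_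
    obtain ⟨x, hx⟩ := hstar e
    rw [hx]
    simp
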